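/- A set K ⊆ ℝ^d is Capra-convex if and only if K is a cone and ρ(K) = cl conv(ρ(K)) ∩ (S ∪ {0}), where S is the unit sphere of the source norm. -/

import Mathlib

open Classical in
noncomputable def radProj {d : ℕ} (N : EuclideanSpace ℝ (Fin d) → ℝ)
    (x : EuclideanSpace ℝ (Fin d)) : EuclideanSpace ℝ (Fin d) :=
  if x = 0 then 0 else (N x)⁻¹ • x

noncomputable def capraConj {d : ℕ} (N : EuclideanSpace ℝ (Fin d) → ℝ)
    (f : EuclideanSpace ℝ (Fin d) → EReal) (y : EuclideanSpace ℝ (Fin d)) : EReal :=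
  ⨆ x : EuclideanSpace ℝ (Fin d), ((inner ℝ (radProj N x) y : ℝ) : EReal) - f x

noncomputable def capraBiconj {d : ℕ} (N : EuclideanSpace ℝ (Fin d) → ℝ)
    (f : EuclideanSpace ℝ (Fin d) → EReal) (x : EuclideanSpace ℝ (Fin d)) : EReal :=
  ⨆ y : EuclideanSpace ℝ (Fin d), ((inner ℝ (radProj N x) y : ℝ) : EReal) - capraConj N f y

open Classical in
noncomputable def ind {d : ℕ} (X : Set (EuclideanSpace ℝ (Fin d)))
    (x : EuclideanSpace ℝ (Fin d)) : EReal :=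
  if x ∈ X then 0 else ⊤

def IsCapraConvex {d : ℕ} (N : EuclideanSpace ℝ (Fin d) → ℝ)
    (X : Set (EuclideanSpace ℝ (Fin d))) : Prop :=
  ind X = capraBiconj N (ind X)

def coneHull {d : ℕ} (A : Set (EuclideanSpace ℝ (Fin d))) : Set (EuclideanSpace ℝ (Fin d)) :=
  {y | ∃ a ∈ A, ∃ l : ℝ, 0 < l ∧ y = l • a}

section Aux

variable {d : ℕ} {N : EuclideanSpace ℝ (Fin d) → ℝ}

local notation "E" => EuclideanSpace ℝ (Fin d)

lemma myN_zero (hN0 : ∀ x : E, N x = 0 ↔ x = 0) : N 0 = 0 := (hN0 0).mpr rfl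

lemma myN_pos (hN0 : ∀ x : E, N x = 0 ↔ x = 0)
    (hNh : ∀ (a : ℝ) (x : E), N (a • x) = |a| * N x)
    (hNt : ∀ x y : E, N (x + y) ≤ N x + N y) {x : E} (hx : x ≠ 0) : 0 < N x := by
  have hne : N x ≠ 0 := fun h => hx ((hN0 x).mp h)
  have hneg : N (-x) = N x := by
    have := hNh (-1) x
    simpa using this
  have h0 : (0:ℝ) ≤ N x + N x := by
    have := hNt x (-x)
    simp only [add_neg_cancel, myN_zero hN0, hneg] at this
    linarith
  rcases lt_or_eq_of_le (by linarith : (0:ℝ) ≤ N x) with h | h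
  · exact h
  · exact absurd h.symm hne

lemma rad_zero : radProj N (0 : E) = 0 := by simp [radProj]

lemma N_rad (hN0 : ∀ x : E, N x = 0 ↔ x = 0)
    (hNh : ∀ (a : ℝ) (x : E), N (a • x) = |a| * N x)
    (hNt : ∀ x y : E, N (x + y) ≤ N x + N y) {x : E} (hx : x ≠ 0) :
    N (radProj N x) = 1 := by
  have hp := myN_pos hN0 hNh hNt hx
  simp only [radProj, if_neg hx, hNh, abs_inv, abs_of_pos hp]
  field_simp

lemma rad_eq_zero_iff (hN0 : ∀ x : E, N x = 0 ↔ x = 0)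
    (hNh : ∀ (a : ℝ) (x : E), N (a • x) = |a| * N x)
    (hNt : ∀ x y : E, N (x + y) ≤ N x + N y) {x : E} :
    radProj N x = 0 ↔ x = 0 := by
  constructor
  · intro h
    by_contra hx
    have h1 := N_rad hN0 hNh hNt hx
    rw [h, myN_zero hN0] at h1
    norm_num at h1
  · rintro rfl; exact rad_zero

lemma rad_of_N_one (hN0 : ∀ x : E, N x = 0 ↔ x = 0) {u : E} (hu : N u = 1) :
    radProj N u = u := by
  have hne : u ≠ 0 := by
    intro h; rw [h, myN_zero hN0] at hu; norm_num at hu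
  simp [radProj, if_neg hne, hu]

lemma rad_rad (hN0 : ∀ x : E, N x = 0 ↔ x = 0)
    (hNh : ∀ (a : ℝ) (x : E), N (a • x) = |a| * N x)
    (hNt : ∀ x y : E, N (x + y) ≤ N x + N y) (x : E) :
    radProj N (radProj N x) = radProj N x := by
  by_cases hx : x = 0
  · simp [hx, rad_zero]
  · exact rad_of_N_one hN0 (N_rad hN0 hNh hNt hx)

lemma rad_smul (hN0 : ∀ x : E, N x = 0 ↔ x = 0)
    (hNh : ∀ (a : ℝ) (x : E), N (a • x) = |a| * N x)
    (hNt : ∀ x y : E, N (x + y) ≤ N x + N y) {l : ℝ} (hl : 0 < l) (x : E) :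
    radProj N (l • x) = radProj N x := by
  by_cases hx : x = 0
  · simp [hx, rad_zero]
  · have hlx : l • x ≠ 0 := smul_ne_zero (ne_of_gt hl) hx
    have hNx := myN_pos hN0 hNh hNt hx
    simp only [radProj, if_neg hx, if_neg hlx, hNh, abs_of_pos hl, smul_smul]
    congr 1
    field_simp

lemma eq_N_smul_rad {x : E} (hx : x ≠ 0) (hN0 : ∀ x : E, N x = 0 ↔ x = 0) :
    x = N x • radProj N x := by
  have hne : N x ≠ 0 := fun h => hx ((hN0 x).mp h)
  simp [radProj, if_neg hx, smul_smul, mul_inv_cancel₀ hne]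

lemma le_capraConj_ind {K : Set E} {x : E} (hx : x ∈ K) (y : E) :
    ((inner ℝ (radProj N x) y : ℝ) : EReal) ≤ capraConj N (ind K) y := by
  have h := le_iSup (fun x : E => ((inner ℝ (radProj N x) y : ℝ) : EReal) - ind K x) x
  have hterm : ((inner ℝ (radProj N x) y : ℝ) : EReal) - ind K x
      = ((inner ℝ (radProj N x) y : ℝ) : EReal) := by
    simp [ind, hx, sub_eq_add_neg]
  rw [hterm] at h
  exact h

lemma capraConj_ind_le {K : Set E} {y : E} {c : EReal}
    (h : ∀ x ∈ K, ((inner ℝ (radProj N x) y : ℝ) : EReal) ≤ c) :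
    capraConj N (ind K) y ≤ c := by
  apply iSup_le
  intro x
  by_cases hx : x ∈ K
  · have hterm : ((inner ℝ (radProj N x) y : ℝ) : EReal) - ind K x
        = ((inner ℝ (radProj N x) y : ℝ) : EReal) := by
      simp [ind, hx, sub_eq_add_neg]
    rw [hterm]; exact h x hx
  · have hterm : ((inner ℝ (radProj N x) y : ℝ) : EReal) - ind K x = ⊥ := by
      simp [ind, hx, EReal.sub_top]
    rw [hterm]; exact bot_le

lemma biconj_ind_eq (hN0 : ∀ x : E, N x = 0 ↔ x = 0)
    (hNh : ∀ (a : ℝ) (x : E), N (a • x) = |a| * N x)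
    (hNt : ∀ x y : E, N (x + y) ≤ N x + N y) (K : Set E) (x : E) :
    capraBiconj N (ind K) x
      = ind (radProj N ⁻¹' closure (convexHull ℝ (radProj N '' K))) x := by
  set C := closure (convexHull ℝ (radProj N '' K)) with hC
  rcases Set.eq_empty_or_nonempty K with hK | ⟨x₀, hx₀⟩
  · -- K empty : biconj ≡ ⊤ and C = ∅
    have hconj : ∀ y : E, capraConj N (ind K) y = ⊥ := by
      intro y
      apply le_bot_iff.mp
      apply iSup_le
      intro x'
      have : x' ∉ K := by rw [hK]; exact Set.notMem_empty x'
      simp [ind, this, EReal.sub_top]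
    have hCempty : C = (∅ : Set E) := by
      rw [hC, hK]; simp
    have hmem : radProj N x ∉ radProj N ⁻¹' C := by
      rw [hCempty]; simp
    have hx' : x ∉ radProj N ⁻¹' C := by rw [hCempty]; simp
    rw [ind, if_neg hx']
    apply top_le_iff.mp
    have := le_iSup (fun y : E =>
      ((inner ℝ (radProj N x) y : ℝ) : EReal) - capraConj N (ind K) y) 0
    rw [hconj 0] at this
    have h2 : ((inner ℝ (radProj N x) (0:E) : ℝ) : EReal) - ⊥ = ⊤ :=
      EReal.coe_sub_bot _
    rw [h2] at this
    exact this
  · by_cases hmem : radProj N x ∈ C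
    · have hx' : x ∈ radProj N ⁻¹' C := hmem
      rw [ind, if_pos hx']
      apply le_antisymm
      · apply iSup_le
        intro y
        by_cases htop : capraConj N (ind K) y = ⊤
        · rw [htop, EReal.sub_top]; exact bot_le
        · have hbot : capraConj N (ind K) y ≠ ⊥ := by
            intro h
            have := le_capraConj_ind (N := N) hx₀ y
            rw [h] at this
            exact EReal.coe_ne_bot _ (le_bot_iff.mp this)
          set r : ℝ := (capraConj N (ind K) y).toReal with hr
          have hre : (r : EReal) = capraConj N (ind K) y := EReal.coe_toReal htop hbot
          have hle : ∀ x' ∈ K, (inner ℝ (radProj N x') y : ℝ) ≤ r := by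
            intro x' hx'
            have := le_capraConj_ind (N := N) hx' y
            rw [← hre] at this
            exact_mod_cast this
          -- halfspace
          have hHconv : Convex ℝ {v : E | (inner ℝ v y : ℝ) ≤ r} := by
            intro a ha b hb s t hs ht hst
            simp only [Set.mem_setOf_eq] at *
            rw [inner_add_left, real_inner_smul_left, real_inner_smul_left]
            calc s * (inner ℝ a y : ℝ) + t * inner ℝ b y ≤ s * r + t * r := by
                  apply add_le_add
                  · exact mul_le_mul_of_nonneg_left ha hs
                  · exact mul_le_mul_of_nonneg_left hb ht
              _ = r := by rw [← add_mul, hst, one_mul]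
          have hHclosed : IsClosed {v : E | (inner ℝ v y : ℝ) ≤ r} := by
            have hcont : Continuous fun v : E => (inner ℝ v y : ℝ) :=
              continuous_id.inner continuous_const
            exact isClosed_le hcont continuous_const
          have hsub : C ⊆ {v : E | (inner ℝ v y : ℝ) ≤ r} := by
            rw [hC]
            apply closure_minimal _ hHclosed
            apply convexHull_min _ hHconv
            rintro u ⟨x', hx', rfl⟩
            exact hle x' hx'
          have hxr : (inner ℝ (radProj N x) y : ℝ) ≤ r := hsub hmem
          rw [← hre, ← EReal.coe_sub]
          exact_mod_cast sub_nonpos.mpr hxr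
      · have h0 : capraConj N (ind K) 0 = 0 := by
          apply le_antisymm
          · apply capraConj_ind_le
            intro x' _
            simp [inner_zero_right]
          · have := le_capraConj_ind (N := N) hx₀ 0
            simpa [inner_zero_right] using this
        have := le_iSup (fun y : E =>
          ((inner ℝ (radProj N x) y : ℝ) : EReal) - capraConj N (ind K) y) 0
        rw [h0] at this
        simpa [capraBiconj, inner_zero_right, sub_eq_add_neg] using this
    · have hx' : x ∉ radProj N ⁻¹' C := hmem
      rw [ind, if_neg hx']
      -- separation
      have hconv : Convex ℝ C := (convex_convexHull ℝ _).closure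
      have hclosed : IsClosed C := isClosed_closure
      obtain ⟨f, r, hfr, hrx⟩ := geometric_hahn_banach_closed_point hconv hclosed hmem
      set w := (InnerProductSpace.toDual ℝ (EuclideanSpace ℝ (Fin d))).symm f with hw
      have hfw : ∀ v : E, f v = (inner ℝ v w : ℝ) := by
        intro v
        rw [real_inner_comm]
        exact (InnerProductSpace.toDual_symm_apply).symm
      set ε : ℝ := f (radProj N x) - r with hε
      have hεpos : 0 < ε := sub_pos.mpr hrx
      rw [EReal.eq_top_iff_forall_lt]
      intro s
      obtain ⟨n, hn⟩ := exists_nat_gt (s / ε)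
      have hns : s < n * ε := by
        rw [div_lt_iff₀ hεpos] at hn
        linarith
      -- the candidate y
      set y : E := (n : ℝ) • w with hy
      have hconjle : capraConj N (ind K) y ≤ ((n * r : ℝ) : EReal) := by
        apply capraConj_ind_le
        intro x' hx'K
        have hxC : radProj N x' ∈ C :=
          subset_closure (subset_convexHull ℝ _ ⟨x', hx'K, rfl⟩)
        have : (inner ℝ (radProj N x') w : ℝ) < r := by
          rw [← hfw]; exact hfr _ hxC
        have hle : (inner ℝ (radProj N x') y : ℝ) ≤ n * r := by
          rw [hy, real_inner_smul_right]
          exact mul_le_mul_of_nonneg_left (le_of_lt this) (Nat.cast_nonneg n)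
        exact_mod_cast hle
      have hterm : ((n * ε : ℝ) : EReal)
          ≤ ((inner ℝ (radProj N x) y : ℝ) : EReal) - capraConj N (ind K) y := by
        have h1 : (inner ℝ (radProj N x) y : ℝ) = n * f (radProj N x) := by
          rw [hy, real_inner_smul_right, ← hfw]
        calc ((n * ε : ℝ) : EReal)
            = ((n * f (radProj N x) - n * r : ℝ) : EReal) := by
              rw [hε]; ring_nf
          _ = ((n * f (radProj N x) : ℝ) : EReal) - ((n * r : ℝ) : EReal) := by
              rw [← EReal.coe_sub]
          _ ≤ ((inner ℝ (radProj N x) y : ℝ) : EReal) - capraConj N (ind K) y := by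
              rw [h1]
              exact EReal.sub_le_sub (le_refl _) hconjle
      calc (s : EReal) < ((n * ε : ℝ) : EReal) := by exact_mod_cast hns
        _ ≤ _ := hterm
        _ ≤ _ := le_iSup (fun y : E =>
            ((inner ℝ (radProj N x) y : ℝ) : EReal) - capraConj N (ind K) y) y

end Aux

theorem stmt {d : ℕ} (N : EuclideanSpace ℝ (Fin d) → ℝ)
    (hN0 : ∀ x : EuclideanSpace ℝ (Fin d), N x = 0 ↔ x = 0)
    (hNh : ∀ (a : ℝ) (x : EuclideanSpace ℝ (Fin d)), N (a • x) = |a| * N x)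
    (hNt : ∀ x y : EuclideanSpace ℝ (Fin d), N (x + y) ≤ N x + N y)
    (K : Set (EuclideanSpace ℝ (Fin d))) :
    IsCapraConvex N K ↔
      ((∀ l : ℝ, 0 < l → ∀ x ∈ K, l • x ∈ K) ∧
        radProj N '' K =
          closure (convexHull ℝ (radProj N '' K)) ∩ ({x : EuclideanSpace ℝ (Fin d) | N x = 1} ∪ {0})) := by
  set C := closure (convexHull ℝ (radProj N '' K)) with hCdef
  have hmain : IsCapraConvex N K ↔ ∀ x, x ∈ K ↔ radProj N x ∈ C := by
    unfold IsCapraConvex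
    constructor
    · intro h x
      have hx := congrFun h x
      rw [biconj_ind_eq hN0 hNh hNt K x] at hx
      simp only [ind] at hx
      constructor
      · intro hxK
        by_contra h'
        have h'' : x ∉ radProj N ⁻¹' closure (convexHull ℝ (radProj N '' K)) := h'
        rw [if_pos hxK, if_neg h''] at hx
        exact EReal.zero_ne_top hx
      · intro hxC
        by_contra h'
        have h'' : x ∈ radProj N ⁻¹' closure (convexHull ℝ (radProj N '' K)) := hxC
        rw [if_neg h', if_pos h''] at hx
        exact EReal.zero_ne_top hx.symm
    · intro h
      funext x
      rw [biconj_ind_eq hN0 hNh hNt K x]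
      show ind K x = ind (radProj N ⁻¹' C) x
      unfold ind
      by_cases hx : x ∈ K
      · rw [if_pos hx,
          if_pos (show x ∈ radProj N ⁻¹' C from (h x).mp hx)]
      · rw [if_neg hx,
          if_neg (show x ∉ radProj N ⁻¹' C from fun h' => hx ((h x).mpr h'))]
  rw [hmain]
  constructor
  · intro h
    constructor
    · intro l hl x hx
      rw [h, rad_smul hN0 hNh hNt hl]
      exact (h x).mp hx
    · ext u
      constructor
      · rintro ⟨x, hx, rfl⟩
        refine ⟨(h x).mp hx, ?_⟩
        by_cases hx0 : x = 0
        · right; simp [hx0, rad_zero]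
        · left; exact N_rad hN0 hNh hNt hx0
      · rintro ⟨huC, hu⟩
        rcases hu with h1 | h0
        · have hru : radProj N u = u := rad_of_N_one hN0 h1
          have huK : u ∈ K := (h u).mpr (by rw [hru]; exact huC)
          exact ⟨u, huK, hru⟩
        · rcases h0 with rfl
          have h0K : (0 : EuclideanSpace ℝ (Fin d)) ∈ K :=
            (h 0).mpr (by rw [rad_zero]; exact huC)
          exact ⟨0, h0K, rad_zero⟩
  · rintro ⟨hcone, hset⟩ x
    constructor
    · intro hx
      exact subset_closure (subset_convexHull ℝ _ ⟨x, hx, rfl⟩)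
    · intro hxC
      have hmem : radProj N x ∈ radProj N '' K := by
        rw [hset]
        refine ⟨hxC, ?_⟩
        by_cases hx0 : x = 0
        · right; simp [hx0, rad_zero]
        · left; exact N_rad hN0 hNh hNt hx0
      obtain ⟨x', hx'K, he⟩ := hmem
      by_cases hx0 : x = 0
      · have : radProj N x' = 0 := by rw [he, hx0, rad_zero]
        have hx'0 : x' = 0 := (rad_eq_zero_iff hN0 hNh hNt).mp this
        rw [hx0, ← hx'0]
        exact hx'K
      · have hx'0 : x' ≠ 0 := by
          intro h0
          rw [h0, rad_zero] at he
          exact hx0 ((rad_eq_zero_iff hN0 hNh hNt).mp he.symm)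
        have hxeq : x = (N x * (N x')⁻¹) • x' := by
          conv_lhs => rw [eq_N_smul_rad hx0 hN0]
          rw [← he]
          simp only [radProj, if_neg hx'0, smul_smul]
        rw [hxeq]
        exact hcone _ (mul_pos (myN_pos hN0 hNh hNt hx0)
          (inv_pos.mpr (myN_pos hN0 hNh hNt hx'0))) x' hx'K
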